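/- Define g(b) = inf_{ν>0} s(ν, b). Then lim_{b→0⁺} g(b) = 0 and lim_{b→(M²+Kσ²)⁻} g(b) = 1. Consequently, for every ε ∈ (0, 1) there exists a unique b ∈ (0, M² + Kσ²) with g(b) = ε. -/

import Mathlib

open Real Set Filter Topology

set_option maxHeartbeats 1000000

noncomputable def sfn (σ2 M2 : ℝ) (K : ℕ) (b ν : ℝ) : ℝ :=
  (1 + 2 * σ2 * ν) ^ (-(K : ℝ) / 2) *
    Real.exp (ν * b - ν * M2 / (1 + 2 * σ2 * ν))

noncomputable def gfn (σ2 M2 : ℝ) (K : ℕ) (b : ℝ) : ℝ :=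
  ⨅ ν : {x : ℝ // 0 < x}, sfn σ2 M2 K b (ν : ℝ)

instance posRealNonempty : Nonempty {x : ℝ // 0 < x} := ⟨⟨1, one_pos⟩⟩

section Aux

variable {σ2 M2 b b1 b2 ν : ℝ} {K : ℕ}

lemma u_pos (hσ : 0 < σ2) (hν : 0 < ν) : 0 < 1 + 2 * σ2 * ν := by nlinarith

lemma sfn_eq_exp (hσ : 0 < σ2) (hν : 0 < ν) :
    sfn σ2 M2 K b ν =
      Real.exp (-((K : ℝ) / 2) * Real.log (1 + 2 * σ2 * ν) +
        (ν * b - ν * M2 / (1 + 2 * σ2 * ν))) := by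
  have h1 := u_pos hσ hν
  rw [sfn, Real.rpow_def_of_pos h1, ← Real.exp_add]
  congr 1
  ring

lemma sfn_pos (hσ : 0 < σ2) (hν : 0 < ν) : 0 < sfn σ2 M2 K b ν := by
  rw [sfn_eq_exp hσ hν]; exact Real.exp_pos _

lemma sfn_bdd (hσ : 0 < σ2) :
    BddBelow (Set.range fun ν : {x : ℝ // 0 < x} => sfn σ2 M2 K b (ν : ℝ)) := by
  refine ⟨0, ?_⟩
  rintro y ⟨ν, rfl⟩
  exact (sfn_pos hσ ν.2).le

lemma gfn_nonneg (hσ : 0 < σ2) : 0 ≤ gfn σ2 M2 K b :=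
  Real.iInf_nonneg fun ν => (sfn_pos hσ ν.2).le

lemma gfn_le (hσ : 0 < σ2) (hν : 0 < ν) : gfn σ2 M2 K b ≤ sfn σ2 M2 K b ν :=
  ciInf_le (sfn_bdd hσ) ⟨ν, hν⟩

lemma sfn_shift (hσ : 0 < σ2) (hν : 0 < ν) :
    sfn σ2 M2 K b2 ν = sfn σ2 M2 K b1 ν * Real.exp (ν * (b2 - b1)) := by
  rw [sfn_eq_exp hσ hν, sfn_eq_exp hσ hν, ← Real.exp_add]
  congr 1
  ring

lemma sfn_mono (hσ : 0 < σ2) (hν : 0 < ν) (h : b1 ≤ b2) :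
    sfn σ2 M2 K b1 ν ≤ sfn σ2 M2 K b2 ν := by
  rw [sfn_eq_exp hσ hν, sfn_eq_exp hσ hν]
  apply Real.exp_le_exp.mpr
  have : ν * b1 ≤ ν * b2 := mul_le_mul_of_nonneg_left h hν.le
  linarith

lemma gfn_mono (hσ : 0 < σ2) (h : b1 ≤ b2) : gfn σ2 M2 K b1 ≤ gfn σ2 M2 K b2 :=
  ciInf_mono (sfn_bdd hσ) fun ν => sfn_mono hσ ν.2 h

lemma log_le_lin {u : ℝ} (hu : 0 ≤ u) : Real.log (1 + u) ≤ u := by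
  have := Real.log_le_sub_one_of_pos (by linarith : (0:ℝ) < 1 + u)
  linarith

lemma log_ge_quad {u : ℝ} (hu : 0 ≤ u) : u - u ^ 2 ≤ Real.log (1 + u) := by
  have h1 : (0:ℝ) < 1 + u := by linarith
  have h2 := Real.log_le_sub_one_of_pos (inv_pos.mpr h1)
  rw [Real.log_inv] at h2
  have h3 : (1 + u)⁻¹ - 1 = -(u / (1 + u)) := by field_simp; ring
  rw [h3] at h2
  have h4 : u - u ^ 2 ≤ u / (1 + u) := by
    rw [le_div_iff₀ h1]; nlinarith
  linarith

lemma log_le_two_sqrt {u : ℝ} (hu : 0 ≤ u) :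
    Real.log (1 + u) ≤ 2 * (Real.sqrt (1 + u) - 1) := by
  have h1 : (0:ℝ) ≤ 1 + u := by linarith
  have h2 := Real.log_le_sub_one_of_pos (Real.sqrt_pos.mpr (by linarith : (0:ℝ) < 1 + u))
  have h3 : Real.log (Real.sqrt (1 + u)) = Real.log (1 + u) / 2 := Real.log_sqrt h1
  linarith

lemma gfn_le_one (hσ : 0 < σ2) (hM : 0 ≤ M2) : gfn σ2 M2 K b ≤ 1 := by
  have key : ∀ ν : ℝ, 0 < ν → gfn σ2 M2 K b ≤ Real.exp (ν * b) := by
    intro ν hν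
    refine (gfn_le hσ hν).trans ?_
    rw [sfn_eq_exp hσ hν]
    apply Real.exp_le_exp.mpr
    have h1 := u_pos hσ hν
    have hlog : 0 ≤ Real.log (1 + 2 * σ2 * ν) := by
      apply Real.log_nonneg; nlinarith
    have hK0 : 0 ≤ (K : ℝ) / 2 := by positivity
    have hdiv : 0 ≤ ν * M2 / (1 + 2 * σ2 * ν) := by positivity
    nlinarith
  have t1 : Tendsto (fun ν : ℝ => Real.exp (ν * b)) (𝓝[>] (0:ℝ)) (𝓝 1) := by
    have hc : Continuous fun ν : ℝ => Real.exp (ν * b) := by continuity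
    have := hc.tendsto 0
    simp only [zero_mul, Real.exp_zero] at this
    exact this.mono_left nhdsWithin_le_nhds
  exact ge_of_tendsto t1 (eventually_nhdsWithin_of_forall fun ν hν => key ν hν)

/-- lower bound near B -/
lemma sfn_ge_near (hσ : 0 < σ2) (hK : 1 ≤ K) (hM : 0 ≤ M2) (hν : 0 < ν)
    (hb1 : M2 + (K : ℝ) * σ2 - σ2 / 4 ≤ b) (hb2 : b ≤ M2 + (K : ℝ) * σ2) :
    Real.exp (-3 * ((M2 + (K : ℝ) * σ2 - b) / (2 * σ2)) ^ 2) ≤ sfn σ2 M2 K b ν := by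
  have h1 := u_pos hσ hν
  have hu : 0 < 2 * σ2 * ν := by nlinarith
  rw [sfn_eq_exp hσ hν]
  apply Real.exp_le_exp.mpr
  set u : ℝ := 2 * σ2 * ν with hudef
  set c : ℝ := (M2 + (K : ℝ) * σ2 - b) / (2 * σ2) with hcdef
  set L : ℝ := Real.log (1 + u) with hLdef
  have h2σ : (0:ℝ) < 2 * σ2 := by linarith
  have hc0 : 0 ≤ c := div_nonneg (by linarith) h2σ.le
  have hc8 : c ≤ 1 / 8 := by
    rw [hcdef, div_le_iff₀ h2σ]; nlinarith
  have hσ' : σ2 ≠ 0 := ne_of_gt hσ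
  have key1 : ν * b = ν * M2 + (K : ℝ) / 2 * u - c * u := by
    rw [hcdef, hudef]; field_simp; ring
  have key2 : ν * M2 / (1 + u) ≤ ν * M2 := div_le_self (by positivity) (by nlinarith)
  have hLu : L ≤ u := log_le_lin hu.le
  have key3 : (1:ℝ) / 2 * (u - L) ≤ (K : ℝ) / 2 * (u - L) := by
    apply mul_le_mul_of_nonneg_right _ (by linarith)
    have : (1:ℝ) ≤ (K:ℝ) := by exact_mod_cast hK
    linarith
  have key4 : -3 * c ^ 2 ≤ 1 / 2 * (u - L) - c * u := by
    set t : ℝ := Real.sqrt (1 + u) with htdef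
    have ht2 : t ^ 2 = 1 + u := Real.sq_sqrt (by linarith)
    have ht1 : 1 ≤ t := by
      nlinarith [Real.sqrt_nonneg (1 + u)]
    have hlog : L ≤ 2 * (t - 1) := log_le_two_sqrt hu.le
    nlinarith [sq_nonneg (3 * (t - 1) - 8 * c),
      mul_nonneg (by linarith : (0:ℝ) ≤ 1 / 8 - c) (sq_nonneg (t - 1))]
  nlinarith

/-- quadratic upper bound on exponent -/
lemma sfn_le_quad (hσ : 0 < σ2) (hM : 0 ≤ M2) (hν : 0 < ν) :
    sfn σ2 M2 K b ν ≤
      Real.exp (-(ν * (M2 + (K : ℝ) * σ2 - b)) +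
        (2 * (K : ℝ) * σ2 ^ 2 + 2 * σ2 * M2) * ν ^ 2) := by
  have h1 := u_pos hσ hν
  have hu : 0 < 2 * σ2 * ν := by nlinarith
  rw [sfn_eq_exp hσ hν]
  apply Real.exp_le_exp.mpr
  have hL : 2 * σ2 * ν - (2 * σ2 * ν) ^ 2 ≤ Real.log (1 + 2 * σ2 * ν) :=
    log_ge_quad hu.le
  have hK0 : (0:ℝ) ≤ (K : ℝ) / 2 := by positivity
  have f1 : (K : ℝ) / 2 * (2 * σ2 * ν - (2 * σ2 * ν) ^ 2) ≤
      (K : ℝ) / 2 * Real.log (1 + 2 * σ2 * ν) :=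
    mul_le_mul_of_nonneg_left hL hK0
  have f2 : ν * M2 * (1 - 2 * σ2 * ν) ≤ ν * M2 / (1 + 2 * σ2 * ν) := by
    rw [le_div_iff₀ h1]
    nlinarith [mul_nonneg hν.le hM]
  nlinarith

lemma gfn_lt_one (hσ : 0 < σ2) (hK : 1 ≤ K) (hM : 0 ≤ M2)
    (hb0 : 0 < b) (hbB : b < M2 + (K : ℝ) * σ2) :
    gfn σ2 M2 K b ≤
      Real.exp (-(M2 + (K : ℝ) * σ2 - b) ^ 2 /
        (4 * (2 * (K : ℝ) * σ2 ^ 2 + 2 * σ2 * M2))) := by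
  set C : ℝ := 2 * (K : ℝ) * σ2 ^ 2 + 2 * σ2 * M2 with hCdef
  have hK1 : (1:ℝ) ≤ (K:ℝ) := by exact_mod_cast hK
  have hC : 0 < C := by nlinarith
  set d : ℝ := M2 + (K : ℝ) * σ2 - b with hddef
  have hd : 0 < d := by simp only [hddef]; linarith
  set ν : ℝ := d / (2 * C) with hνdef
  have hν : 0 < ν := by positivity
  refine (gfn_le hσ hν).trans ((sfn_le_quad hσ hM hν).trans ?_)
  apply Real.exp_le_exp.mpr
  have e1 : -(ν * d) + C * ν ^ 2 = -d ^ 2 / (4 * C) := by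
    rw [hνdef]; field_simp; ring
  linarith [e1.le, e1.ge]

/-- lower bound: exponent at least ν c/2 - D, for b ≥ c -/
lemma sfn_ge_pos {c : ℝ} (hσ : 0 < σ2) (hK : 1 ≤ K) (hM : 0 ≤ M2)
    (hc : 0 < c) (hb : c ≤ b) (hν : 0 < ν) :
    Real.exp (ν * c / 2 -
      ((K : ℝ) / 2 * Real.log (max (2 * (K : ℝ) * σ2 / c) 1) +
        (K : ℝ) / 2 / max (2 * (K : ℝ) * σ2 / c) 1 + M2 / (2 * σ2))) ≤
    sfn σ2 M2 K b ν := by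
  have h1 := u_pos hσ hν
  have hu : 0 < 2 * σ2 * ν := by nlinarith
  have hK1 : (1:ℝ) ≤ (K:ℝ) := by exact_mod_cast hK
  set a : ℝ := max (2 * (K : ℝ) * σ2 / c) 1 with hadef
  have ha1 : 1 ≤ a := le_max_right _ _
  have ha0 : 0 < a := by linarith
  have haK : (K : ℝ) * σ2 / a ≤ c / 2 := by
    rw [div_le_div_iff₀ ha0 two_pos]
    have h2 : 2 * (K : ℝ) * σ2 / c ≤ a := le_max_left _ _
    rw [div_le_iff₀ hc] at h2
    nlinarith
  rw [sfn_eq_exp hσ hν]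
  apply Real.exp_le_exp.mpr
  set u : ℝ := 2 * σ2 * ν with hudef
  have f1 : Real.log (1 + u) ≤ Real.log a + (1 + u) / a := by
    have h2 := Real.log_le_sub_one_of_pos (by positivity : (0:ℝ) < (1 + u) / a)
    have h3 : Real.log ((1 + u) / a) = Real.log (1 + u) - Real.log a :=
      Real.log_div (by linarith) (ne_of_gt ha0)
    linarith
  have f2 : ν * M2 / (1 + u) ≤ M2 / (2 * σ2) := by
    have h4 : ν * M2 / (1 + u) ≤ ν * M2 / u :=
      div_le_div_of_nonneg_left (by positivity) hu (by linarith)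
    have h5 : ν * M2 / u = M2 / (2 * σ2) := by
      rw [hudef]; field_simp
    linarith
  have hK0 : (0:ℝ) ≤ (K : ℝ) / 2 := by positivity
  have f3 : (K : ℝ) / 2 * Real.log (1 + u) ≤
      (K : ℝ) / 2 * (Real.log a + (1 + u) / a) :=
    mul_le_mul_of_nonneg_left f1 hK0
  have f4 : (K : ℝ) / 2 * ((1 + u) / a) = (K : ℝ) / 2 / a + ((K:ℝ) * σ2 / a) * ν := by
    rw [hudef]; field_simp
  have f5 : ((K:ℝ) * σ2 / a) * ν ≤ (c / 2) * ν := mul_le_mul_of_nonneg_right haK hν.le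
  have f6 : ν * c ≤ ν * b := mul_le_mul_of_nonneg_left hb hν.le
  nlinarith

lemma gfn_pos (hσ : 0 < σ2) (hK : 1 ≤ K) (hM : 0 ≤ M2) (hb : 0 < b) :
    0 < gfn σ2 M2 K b := by
  set D : ℝ := (K : ℝ) / 2 * Real.log (max (2 * (K : ℝ) * σ2 / b) 1) +
      (K : ℝ) / 2 / max (2 * (K : ℝ) * σ2 / b) 1 + M2 / (2 * σ2) with hDdef
  have : Real.exp (-D) ≤ gfn σ2 M2 K b := by
    apply le_ciInf
    intro ν
    refine le_trans ?_ (sfn_ge_pos hσ hK hM hb le_rfl ν.2)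
    apply Real.exp_le_exp.mpr
    have : 0 ≤ (ν : ℝ) * b / 2 := div_nonneg (mul_nonneg ν.2.le hb.le) (by norm_num)
    linarith
  exact lt_of_lt_of_le (Real.exp_pos _) this

lemma sfn_ge_one {c : ℝ} (hσ : 0 < σ2) (hK : 1 ≤ K) (hM : 0 ≤ M2)
    (hc : 0 < c) (hb : c ≤ b) (hν : 0 < ν)
    (hνN : 2 * ((K : ℝ) / 2 * Real.log (max (2 * (K : ℝ) * σ2 / c) 1) +
        (K : ℝ) / 2 / max (2 * (K : ℝ) * σ2 / c) 1 + M2 / (2 * σ2)) / c ≤ ν) :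
    1 ≤ sfn σ2 M2 K b ν := by
  set D : ℝ := (K : ℝ) / 2 * Real.log (max (2 * (K : ℝ) * σ2 / c) 1) +
      (K : ℝ) / 2 / max (2 * (K : ℝ) * σ2 / c) 1 + M2 / (2 * σ2) with hDdef
  refine le_trans ?_ (sfn_ge_pos hσ hK hM hc hb hν)
  apply Real.one_le_exp
  rw [div_le_iff₀ hc] at hνN
  rw [← hDdef]
  clear_value D
  linarith

/-- modulus of continuity from the right -/
lemma gfn_ratio {c : ℝ} (hσ : 0 < σ2) (hK : 1 ≤ K) (hM : 0 ≤ M2) (hc : 0 < c) :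
    ∃ N : ℝ, 0 < N ∧ ∀ b1 b2 : ℝ, c ≤ b1 → b1 < M2 + (K : ℝ) * σ2 → b1 ≤ b2 →
      gfn σ2 M2 K b2 ≤ gfn σ2 M2 K b1 * Real.exp (N * (b2 - b1)) := by
  set D : ℝ := (K : ℝ) / 2 * Real.log (max (2 * (K : ℝ) * σ2 / c) 1) +
      (K : ℝ) / 2 / max (2 * (K : ℝ) * σ2 / c) 1 + M2 / (2 * σ2) with hDdef
  refine ⟨max (2 * D / c) 1, lt_of_lt_of_le one_pos (le_max_right _ _), ?_⟩
  set N : ℝ := max (2 * D / c) 1 with hNdef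
  have hN1 : 1 ≤ N := le_max_right _ _
  intro b1 b2 hb1c hb1B h12
  apply le_of_forall_pos_le_add
  intro ε hε
  have hb10 : 0 < b1 := lt_of_lt_of_le hc hb1c
  have hK1 : (1:ℝ) ≤ (K:ℝ) := by exact_mod_cast hK
  have hg1lt : gfn σ2 M2 K b1 < 1 := by
    refine lt_of_le_of_lt (gfn_lt_one hσ hK hM hb10 hb1B) ?_
    apply Real.exp_lt_one_iff.mpr
    have hC : (0:ℝ) < 4 * (2 * (K : ℝ) * σ2 ^ 2 + 2 * σ2 * M2) := by nlinarith
    have hd0 : (0:ℝ) < M2 + (K : ℝ) * σ2 - b1 := by linarith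
    have hd : (0:ℝ) < (M2 + (K : ℝ) * σ2 - b1) ^ 2 := pow_pos hd0 2
    exact div_neg_of_neg_of_pos (by linarith) hC
  have hg10 : 0 ≤ gfn σ2 M2 K b1 := gfn_nonneg hσ
  set E : ℝ := Real.exp (N * (b2 - b1)) with hEdef
  have hE1 : 1 ≤ E := by
    rw [hEdef]
    apply Real.one_le_exp
    nlinarith
  have hE0 : 0 < E := lt_of_lt_of_le one_pos hE1
  set η : ℝ := min (ε / E) ((1 - gfn σ2 M2 K b1) / 2) with hηdef
  have hη : 0 < η := lt_min (div_pos hε hE0) (by linarith)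
  have hηmin : η ≤ (1 - gfn σ2 M2 K b1) / 2 := min_le_right _ _
  have hηdiv : η ≤ ε / E := min_le_left _ _
  clear_value η
  have hlt : gfn σ2 M2 K b1 < gfn σ2 M2 K b1 + η := by linarith
  obtain ⟨⟨ν, hν⟩, hsν⟩ := exists_lt_of_ciInf_lt hlt
  have hs1 : sfn σ2 M2 K b1 ν < 1 := by
    calc sfn σ2 M2 K b1 ν < gfn σ2 M2 K b1 + η := hsν
      _ ≤ gfn σ2 M2 K b1 + (1 - gfn σ2 M2 K b1) / 2 := by linarith
      _ < 1 := by linarith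
  have hνN : ν < N := by
    by_contra hcon
    push_neg at hcon
    have : 2 * D / c ≤ ν := le_trans (le_trans (le_max_left _ _) hcon) le_rfl
    have := sfn_ge_one (b := b1) hσ hK hM hc hb1c hν this
    linarith
  have hsfnpos : 0 ≤ sfn σ2 M2 K b1 ν := (sfn_pos hσ hν).le
  have step : gfn σ2 M2 K b2 ≤ (gfn σ2 M2 K b1 + η) * E := by
    refine le_trans (gfn_le hσ hν) ?_
    rw [sfn_shift (b1 := b1) hσ hν]
    have hexp : Real.exp (ν * (b2 - b1)) ≤ E := by
      rw [hEdef]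
      apply Real.exp_le_exp.mpr
      nlinarith
    have := mul_le_mul hsν.le hexp (Real.exp_pos _).le (by linarith)
    linarith
  have hηE : η * E ≤ ε := by
    calc η * E ≤ ε / E * E := mul_le_mul_of_nonneg_right hηdiv hE0.le
      _ = ε := div_mul_cancel₀ _ (ne_of_gt hE0)
  nlinarith [step, hηE, hg10, hE0.le, hη.le]

lemma sfn_ge_exp_negB (hσ : 0 < σ2) (hM : 0 ≤ M2) (hb : 0 ≤ b) (hν : 0 < ν) :
    Real.exp (-(ν * (M2 + (K : ℝ) * σ2))) ≤ sfn σ2 M2 K b ν := by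
  have h1 := u_pos hσ hν
  have hu : 0 < 2 * σ2 * ν := by nlinarith
  rw [sfn_eq_exp hσ hν]
  apply Real.exp_le_exp.mpr
  have hL : Real.log (1 + 2 * σ2 * ν) ≤ 2 * σ2 * ν := log_le_lin hu.le
  have hK0 : (0:ℝ) ≤ (K : ℝ) / 2 := by positivity
  have f1 : (K : ℝ) / 2 * Real.log (1 + 2 * σ2 * ν) ≤ (K : ℝ) / 2 * (2 * σ2 * ν) :=
    mul_le_mul_of_nonneg_left hL hK0
  have f2 : ν * M2 / (1 + 2 * σ2 * ν) ≤ ν * M2 :=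
    div_le_self (by positivity) (by linarith)
  have f3 : 0 ≤ ν * b := mul_nonneg hν.le hb
  nlinarith

lemma gfn_strictMono (hσ : 0 < σ2) (hK : 1 ≤ K) (hM : 0 ≤ M2)
    (h1 : 0 < b1) (h2 : b1 < b2) (h3 : b2 < M2 + (K : ℝ) * σ2) :
    gfn σ2 M2 K b1 < gfn σ2 M2 K b2 := by
  have hK1 : (1:ℝ) ≤ (K:ℝ) := by exact_mod_cast hK
  have hB : 0 < M2 + (K : ℝ) * σ2 := by nlinarith
  have hb20 : 0 < b2 := lt_trans h1 h2
  set q : ℝ := Real.exp (-(M2 + (K : ℝ) * σ2 - b2) ^ 2 /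
      (4 * (2 * (K : ℝ) * σ2 ^ 2 + 2 * σ2 * M2))) with hqdef
  have hq1 : q < 1 := by
    rw [hqdef]
    apply Real.exp_lt_one_iff.mpr
    have hC : (0:ℝ) < 4 * (2 * (K : ℝ) * σ2 ^ 2 + 2 * σ2 * M2) := by nlinarith
    have hd0 : (0:ℝ) < M2 + (K : ℝ) * σ2 - b2 := by linarith
    have hd : (0:ℝ) < (M2 + (K : ℝ) * σ2 - b2) ^ 2 := pow_pos hd0 2
    exact div_neg_of_neg_of_pos (by linarith) hC
  have hq0 : 0 < q := Real.exp_pos _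
  have hgq : gfn σ2 M2 K b2 ≤ q := gfn_lt_one hσ hK hM hb20 h3
  clear_value q
  set ν0 : ℝ := (1 - q) / (2 * (M2 + (K : ℝ) * σ2)) with hν0def
  have hν0 : 0 < ν0 := div_pos (by linarith) (by linarith)
  have hν0B : ν0 * (M2 + (K : ℝ) * σ2) = (1 - q) / 2 := by
    rw [hν0def]; field_simp
  clear_value ν0
  have key : gfn σ2 M2 K b1 ≤ gfn σ2 M2 K b2 * Real.exp (-(ν0 * (b2 - b1))) := by
    apply le_of_forall_pos_le_add
    intro ε hε
    set η : ℝ := min ε ((1 - q) / 2) with hηdef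
    have hη : 0 < η := lt_min hε (by linarith)
    have hηq : η ≤ (1 - q) / 2 := min_le_right _ _
    have hηε : η ≤ ε := min_le_left _ _
    clear_value η
    have hlt : gfn σ2 M2 K b2 < gfn σ2 M2 K b2 + η := by linarith
    obtain ⟨⟨ν, hν⟩, hsν⟩ := exists_lt_of_ciInf_lt hlt
    have hupper : sfn σ2 M2 K b2 ν < (1 + q) / 2 := by
      calc sfn σ2 M2 K b2 ν < gfn σ2 M2 K b2 + η := hsν
        _ ≤ q + (1 - q) / 2 := by linarith
        _ = (1 + q) / 2 := by ring
    have hν0ν : ν0 ≤ ν := by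
      by_contra hcon
      push_neg at hcon
      have hlow := sfn_ge_exp_negB (K := K) (b := b2) hσ hM hb20.le hν
      have h5 : 1 - ν * (M2 + (K : ℝ) * σ2) ≤ Real.exp (-(ν * (M2 + (K : ℝ) * σ2))) := by
        have := Real.add_one_le_exp (-(ν * (M2 + (K : ℝ) * σ2)))
        linarith
      have h6 : ν * (M2 + (K : ℝ) * σ2) < ν0 * (M2 + (K : ℝ) * σ2) :=
        mul_lt_mul_of_pos_right hcon hB
      nlinarith [hν0B]
    have hg2 : 0 ≤ gfn σ2 M2 K b2 := gfn_nonneg hσ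
    have step : gfn σ2 M2 K b1 ≤ (gfn σ2 M2 K b2 + η) * Real.exp (-(ν0 * (b2 - b1))) := by
      refine le_trans (gfn_le hσ hν) ?_
      have hshift : sfn σ2 M2 K b1 ν = sfn σ2 M2 K b2 ν * Real.exp (ν * (b1 - b2)) :=
        sfn_shift hσ hν
      rw [hshift]
      have hexp : Real.exp (ν * (b1 - b2)) ≤ Real.exp (-(ν0 * (b2 - b1))) := by
        apply Real.exp_le_exp.mpr
        nlinarith
      exact mul_le_mul hsν.le hexp (Real.exp_pos _).le (by linarith)
    have hexp1 : Real.exp (-(ν0 * (b2 - b1))) ≤ 1 := by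
      apply Real.exp_le_one_iff.mpr
      nlinarith
    nlinarith [step, hexp1, hηε, hg2, hη.le, Real.exp_pos (-(ν0 * (b2 - b1)))]
  have hg2pos : 0 < gfn σ2 M2 K b2 := gfn_pos hσ hK hM hb20
  have hexplt : Real.exp (-(ν0 * (b2 - b1))) < 1 := by
    apply Real.exp_lt_one_iff.mpr
    nlinarith
  have hg2pos' := mul_lt_mul_of_pos_left hexplt hg2pos
  rw [mul_one] at hg2pos'
  linarith

lemma gfn_continuousAt (hσ : 0 < σ2) (hK : 1 ≤ K) (hM : 0 ≤ M2)
    (h0 : 0 < b) (hB : b < M2 + (K : ℝ) * σ2) :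
    ContinuousAt (gfn σ2 M2 K) b := by
  obtain ⟨N, hN, hrat⟩ := gfn_ratio (c := b / 2) hσ hK hM (by linarith)
  rw [Metric.continuousAt_iff]
  intro ε hε
  have hδ0 : 0 < Real.log (1 + ε) / N := div_pos (Real.log_pos (by linarith)) hN
  refine ⟨min (b / 2) (Real.log (1 + ε) / N), lt_min (by linarith) hδ0, ?_⟩
  intro x hx
  rw [Real.dist_eq] at hx ⊢
  have hx1 : |x - b| < b / 2 := lt_of_lt_of_le hx (min_le_left _ _)
  have hx2 : |x - b| < Real.log (1 + ε) / N := lt_of_lt_of_le hx (min_le_right _ _)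
  have habs := abs_lt.mp hx1
  have hxb : b / 2 < x := by linarith [habs.1]
  have hNx : N * |x - b| < Real.log (1 + ε) := by
    rw [lt_div_iff₀ hN] at hx2
    · linarith [hx2]
  have hexpgen : ∀ y : ℝ, y ≤ |x - b| → Real.exp (N * y) < 1 + ε := by
    intro y hy
    calc Real.exp (N * y) ≤ Real.exp (N * |x - b|) := by
          apply Real.exp_le_exp.mpr
          exact mul_le_mul_of_nonneg_left hy hN.le
      _ < Real.exp (Real.log (1 + ε)) := Real.exp_lt_exp.mpr hNx
      _ = 1 + ε := Real.exp_log (by linarith)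
  rw [abs_sub_lt_iff]
  rcases le_or_gt b x with hbx | hbx
  · have h := hrat b x (by linarith) hB hbx
    have hmono := gfn_mono (K := K) (M2 := M2) hσ hbx
    have hgb1 : gfn σ2 M2 K b ≤ 1 := gfn_le_one hσ hM
    have hgb0 : 0 ≤ gfn σ2 M2 K b := gfn_nonneg hσ
    have hE1 : 1 ≤ Real.exp (N * (x - b)) :=
      Real.one_le_exp (mul_nonneg hN.le (by linarith))
    have hexp : Real.exp (N * (x - b)) < 1 + ε := hexpgen _ (le_abs_self _)
    constructor
    · nlinarith [mul_nonneg (by linarith : (0:ℝ) ≤ 1 - gfn σ2 M2 K b)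
        (by linarith : (0:ℝ) ≤ Real.exp (N * (x - b)) - 1)]
    · linarith
  · have h := hrat x b (by linarith) (by linarith) hbx.le
    have hmono := gfn_mono (K := K) (M2 := M2) hσ hbx.le
    have hgx1 : gfn σ2 M2 K x ≤ 1 := gfn_le_one hσ hM
    have hgx0 : 0 ≤ gfn σ2 M2 K x := gfn_nonneg hσ
    have hE1 : 1 ≤ Real.exp (N * (b - x)) :=
      Real.one_le_exp (mul_nonneg hN.le (by linarith))
    have hexp : Real.exp (N * (b - x)) < 1 + ε := by
      refine hexpgen _ ?_
      rw [abs_sub_comm]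
      exact le_abs_self _
    constructor
    · linarith
    · nlinarith [mul_nonneg (by linarith : (0:ℝ) ≤ 1 - gfn σ2 M2 K x)
        (by linarith : (0:ℝ) ≤ Real.exp (N * (b - x)) - 1)]

lemma gfn_tendsto_zero (hσ : 0 < σ2) (hK : 1 ≤ K) (hM : 0 ≤ M2) :
    Tendsto (gfn σ2 M2 K) (𝓝[>] (0:ℝ)) (𝓝 0) := by
  rw [Metric.tendsto_nhdsWithin_nhds]
  intro ε hε
  have hK1 : (1:ℝ) ≤ (K:ℝ) := by exact_mod_cast hK
  set ν : ℝ := 2 / (σ2 * ε ^ 2) with hνdef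
  have hν : 0 < ν := by positivity
  have hu : 2 * σ2 * ν = 4 / ε ^ 2 := by
    rw [hνdef]; field_simp; ring
  refine ⟨Real.log 2 / ν, div_pos (Real.log_pos one_lt_two) hν, ?_⟩
  intro x hx hdx
  have hx0 : (0:ℝ) < x := hx
  rw [Real.dist_eq, sub_zero, abs_of_pos hx0] at hdx
  rw [Real.dist_eq, sub_zero, abs_of_nonneg (gfn_nonneg hσ)]
  have h1 := u_pos hσ hν
  have h4e : (0:ℝ) < 4 / ε ^ 2 := by positivity
  have h1u : 4 / ε ^ 2 ≤ 1 + 2 * σ2 * ν := by rw [hu]; linarith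
  have h14 : (1:ℝ) ≤ 1 + 2 * σ2 * ν := by rw [hu]; linarith
  have step1 : (1 + 2 * σ2 * ν) ^ (-(K:ℝ)/2) ≤ (1 + 2 * σ2 * ν) ^ (-(1:ℝ)/2) :=
    Real.rpow_le_rpow_of_exponent_le h14 (by linarith)
  have step2 : (1 + 2 * σ2 * ν) ^ (-(1:ℝ)/2) = (Real.sqrt (1 + 2 * σ2 * ν))⁻¹ := by
    rw [show -(1:ℝ)/2 = -(1/2 : ℝ) by norm_num, Real.rpow_neg (by linarith),
      ← Real.sqrt_eq_rpow]
  have step3 : 2 / ε ≤ Real.sqrt (1 + 2 * σ2 * ν) := by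
    have hsq : Real.sqrt ((2 / ε) ^ 2) = 2 / ε := Real.sqrt_sq (by positivity)
    rw [← hsq]
    apply Real.sqrt_le_sqrt
    have h22 : (2 / ε) ^ 2 = 4 / ε ^ 2 := by rw [div_pow]; norm_num
    rw [h22]; exact h1u
  have hA : (1 + 2 * σ2 * ν) ^ (-(K:ℝ)/2) ≤ ε / 2 := by
    refine step1.trans ?_
    rw [step2]
    have h2ε : (0:ℝ) < 2 / ε := by positivity
    have := inv_anti₀ h2ε step3
    rwa [inv_div] at this
  have hνx : ν * x < Real.log 2 := by
    rw [lt_div_iff₀ hν] at hdx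
    linarith
  have hE : Real.exp (ν * x - ν * M2 / (1 + 2 * σ2 * ν)) < 2 := by
    have hd0 : 0 ≤ ν * M2 / (1 + 2 * σ2 * ν) :=
      div_nonneg (mul_nonneg hν.le hM) h1.le
    calc Real.exp (ν * x - ν * M2 / (1 + 2 * σ2 * ν)) ≤ Real.exp (ν * x) := by
          apply Real.exp_le_exp.mpr; linarith
      _ < Real.exp (Real.log 2) := Real.exp_lt_exp.mpr hνx
      _ = 2 := Real.exp_log two_pos
  have hsfn : sfn σ2 M2 K x ν < ε := by
    rw [sfn]
    have hA0 : 0 ≤ (1 + 2 * σ2 * ν) ^ (-(K:ℝ)/2) := Real.rpow_nonneg h1.le _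
    calc (1 + 2 * σ2 * ν) ^ (-(K:ℝ)/2) *
          Real.exp (ν * x - ν * M2 / (1 + 2 * σ2 * ν))
        ≤ ε / 2 * Real.exp (ν * x - ν * M2 / (1 + 2 * σ2 * ν)) :=
          mul_le_mul_of_nonneg_right hA (Real.exp_pos _).le
      _ < ε / 2 * 2 := by
          exact mul_lt_mul_of_pos_left hE (by linarith)
      _ = ε := by ring
  exact lt_of_le_of_lt (gfn_le hσ hν) hsfn

lemma gfn_tendsto_one (hσ : 0 < σ2) (hK : 1 ≤ K) (hM : 0 ≤ M2) :
    Tendsto (gfn σ2 M2 K) (𝓝[<] (M2 + (K : ℝ) * σ2)) (𝓝 1) := by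
  rw [Metric.tendsto_nhdsWithin_nhds]
  intro ε hε
  have hK1 : (1:ℝ) ≤ (K:ℝ) := by exact_mod_cast hK
  have hm0 : 0 < min ε 1 := lt_min hε one_pos
  refine ⟨min (σ2 / 4) (σ2 * min ε 1), lt_min (by linarith) (mul_pos hσ hm0), ?_⟩
  intro x hx hdx
  have hxB : x < M2 + (K : ℝ) * σ2 := hx
  rw [Real.dist_eq, abs_of_neg (by linarith : x - (M2 + (K : ℝ) * σ2) < 0)] at hdx
  have hd1 : M2 + (K : ℝ) * σ2 - x < σ2 / 4 := by
    have := min_le_left (σ2 / 4) (σ2 * min ε 1)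
    linarith
  have hd2 : M2 + (K : ℝ) * σ2 - x < σ2 * min ε 1 := by
    have := min_le_right (σ2 / 4) (σ2 * min ε 1)
    linarith
  have hlow : Real.exp (-3 * ((M2 + (K : ℝ) * σ2 - x) / (2 * σ2)) ^ 2) ≤
      gfn σ2 M2 K x :=
    le_ciInf fun ν => sfn_ge_near hσ hK hM ν.2 (by linarith) (by linarith)
  set c : ℝ := (M2 + (K : ℝ) * σ2 - x) / (2 * σ2) with hcdef
  have hc0 : 0 ≤ c := div_nonneg (by linarith) (by linarith)
  have hcm : c < min ε 1 / 2 := by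
    rw [hcdef, div_lt_div_iff₀ (by linarith) two_pos]
    linarith
  have h1 : 1 + -3 * c ^ 2 ≤ Real.exp (-3 * c ^ 2) := by
    have := Real.add_one_le_exp (-3 * c ^ 2)
    linarith
  have h2 : 3 * c ^ 2 < ε := by
    have hm1 : min ε 1 ≤ 1 := min_le_right _ _
    have hmε : min ε 1 ≤ ε := min_le_left _ _
    nlinarith [mul_le_mul hcm.le hcm.le hc0 (by positivity : (0:ℝ) ≤ min ε 1 / 2)]
  have hup : gfn σ2 M2 K x ≤ 1 := gfn_le_one hσ hM
  rw [Real.dist_eq, abs_of_nonpos (by linarith : gfn σ2 M2 K x - 1 ≤ 0)]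
  linarith

end Aux

theorem chernoff_inf_limits_and_unique_threshold (σ2 M2 : ℝ) (K : ℕ)
    (hσ : 0 < σ2) (hK : 1 ≤ K) (hM : 0 ≤ M2) :
    Tendsto
      (fun b : ℝ =>
        ⨅ ν : {x : ℝ // 0 < x},
          (1 + 2 * σ2 * (ν : ℝ)) ^ (-(K : ℝ) / 2) *
            Real.exp ((ν : ℝ) * b - (ν : ℝ) * M2 / (1 + 2 * σ2 * (ν : ℝ))))
      (nhdsWithin 0 (Set.Ioi 0)) (nhds 0) ∧
    Tendsto
      (fun b : ℝ =>
        ⨅ ν : {x : ℝ // 0 < x},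
          (1 + 2 * σ2 * (ν : ℝ)) ^ (-(K : ℝ) / 2) *
            Real.exp ((ν : ℝ) * b - (ν : ℝ) * M2 / (1 + 2 * σ2 * (ν : ℝ))))
      (nhdsWithin (M2 + (K : ℝ) * σ2) (Set.Iio (M2 + (K : ℝ) * σ2))) (nhds 1) ∧
    ∀ ε : ℝ, ε ∈ Set.Ioo (0 : ℝ) 1 →
      ∃! b : ℝ, b ∈ Set.Ioo 0 (M2 + (K : ℝ) * σ2) ∧
        (⨅ ν : {x : ℝ // 0 < x},
          (1 + 2 * σ2 * (ν : ℝ)) ^ (-(K : ℝ) / 2) *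
            Real.exp ((ν : ℝ) * b - (ν : ℝ) * M2 / (1 + 2 * σ2 * (ν : ℝ)))) = ε := by
  have hK1 : (1:ℝ) ≤ (K:ℝ) := by exact_mod_cast hK
  have hB : 0 < M2 + (K : ℝ) * σ2 := by nlinarith
  have hfun : (fun b : ℝ =>
      ⨅ ν : {x : ℝ // 0 < x},
        (1 + 2 * σ2 * (ν : ℝ)) ^ (-(K : ℝ) / 2) *
          Real.exp ((ν : ℝ) * b - (ν : ℝ) * M2 / (1 + 2 * σ2 * (ν : ℝ)))) =
      gfn σ2 M2 K := rfl
  refine ⟨?_, ?_, ?_⟩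
  · rw [hfun]
    exact gfn_tendsto_zero hσ hK hM
  · rw [hfun]
    exact gfn_tendsto_one hσ hK hM
  · intro ε hε
    obtain ⟨hε0, hε1⟩ := hε
    -- find b1 with gfn b1 < ε
    have h0 := gfn_tendsto_zero (K := K) hσ hK hM
    rw [Metric.tendsto_nhdsWithin_nhds] at h0
    obtain ⟨δ1, hδ1, hδ1p⟩ := h0 ε hε0
    set b1 : ℝ := min (δ1 / 2) (M2 + (K : ℝ) * σ2) / 2 with hb1def
    have hb1pos : 0 < b1 := by
      have : (0:ℝ) < min (δ1 / 2) (M2 + (K : ℝ) * σ2) := lt_min (by linarith) hB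
      rw [hb1def]; linarith
    have hb1B : b1 < M2 + (K : ℝ) * σ2 := by
      have := min_le_right (δ1 / 2) (M2 + (K : ℝ) * σ2)
      rw [hb1def]; linarith
    have hb1δ : b1 < δ1 := by
      have := min_le_left (δ1 / 2) (M2 + (K : ℝ) * σ2)
      rw [hb1def]; linarith
    have hgb1 : gfn σ2 M2 K b1 < ε := by
      have := hδ1p (show b1 ∈ Ioi (0:ℝ) from hb1pos)
        (by rw [Real.dist_eq, sub_zero, abs_of_pos hb1pos]; exact hb1δ)
      rw [Real.dist_eq, sub_zero] at this
      calc gfn σ2 M2 K b1 ≤ |gfn σ2 M2 K b1| := le_abs_self _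
        _ < ε := this
    -- find b2 with gfn b2 > ε
    have h1 := gfn_tendsto_one (K := K) hσ hK hM
    rw [Metric.tendsto_nhdsWithin_nhds] at h1
    obtain ⟨δ2, hδ2, hδ2p⟩ := h1 (1 - ε) (by linarith)
    set b2 : ℝ := M2 + (K : ℝ) * σ2 - min (δ2 / 2) (M2 + (K : ℝ) * σ2) / 2 with hb2def
    have hmin2 : (0:ℝ) < min (δ2 / 2) (M2 + (K : ℝ) * σ2) := lt_min (by linarith) hB
    have hb2B : b2 < M2 + (K : ℝ) * σ2 := by rw [hb2def]; linarith
    have hb2pos : 0 < b2 := by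
      have := min_le_right (δ2 / 2) (M2 + (K : ℝ) * σ2)
      rw [hb2def]; linarith
    have hgb2 : ε < gfn σ2 M2 K b2 := by
      have hd : dist b2 (M2 + (K : ℝ) * σ2) < δ2 := by
        rw [Real.dist_eq, abs_of_neg (by linarith : b2 - (M2 + (K : ℝ) * σ2) < 0)]
        have := min_le_left (δ2 / 2) (M2 + (K : ℝ) * σ2)
        rw [hb2def]; linarith
      have := hδ2p (show b2 ∈ Iio (M2 + (K : ℝ) * σ2) from hb2B) hd
      rw [Real.dist_eq] at this
      have habs := abs_lt.mp this
      linarith [habs.1]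
    have hb12 : b1 < b2 := by
      by_contra hcon
      push_neg at hcon
      have := gfn_mono (K := K) (M2 := M2) hσ hcon
      linarith
    have hcont : ContinuousOn (gfn σ2 M2 K) (Icc b1 b2) := by
      intro y hy
      exact (gfn_continuousAt hσ hK hM (lt_of_lt_of_le hb1pos hy.1)
        (lt_of_le_of_lt hy.2 hb2B)).continuousWithinAt
    have hIVT := intermediate_value_Icc hb12.le hcont
    have hεmem : ε ∈ Icc (gfn σ2 M2 K b1) (gfn σ2 M2 K b2) := ⟨hgb1.le, hgb2.le⟩
    obtain ⟨b, hbmem, hgb⟩ := hIVT hεmem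
    refine ⟨b, ⟨⟨lt_of_lt_of_le hb1pos hbmem.1, lt_of_le_of_lt hbmem.2 hb2B⟩, hgb⟩, ?_⟩
    rintro b' ⟨⟨hb'0, hb'B⟩, hgb'⟩
    have hgb'' : gfn σ2 M2 K b' = ε := hgb'
    by_contra hne
    rcases lt_or_gt_of_ne hne with hlt | hlt
    · have := gfn_strictMono hσ hK hM hb'0 hlt
        (lt_of_le_of_lt hbmem.2 hb2B)
      rw [hgb'', hgb] at this
      exact lt_irrefl _ this
    · have := gfn_strictMono hσ hK hM (lt_of_lt_of_le hb1pos hbmem.1) hlt hb'B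
      rw [hgb'', hgb] at this
      exact lt_irrefl _ this
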